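/- For every natural number k, the k-fold application of the Grover operator to the uniform superposition satisfies G^k u = sin((2k+1)θ)·g + cos((2k+1)θ)·b. -/

import Mathlib

open Real

/-- The `k`-fold application of the Grover operator `G = D ∘ O` to the uniform
superposition satisfies `G^k u = sin((2k+1)θ) • g + cos((2k+1)θ) • b`. -/
theorem grover_power_on_uniform
    (N : ℕ) (hN : 0 < N) (M : Finset (Fin N)) (hM : M.Nonempty) (hMN : M.card < N)
    (u g b : EuclideanSpace ℝ (Fin N))
    (hu : ∀ i, u i = 1 / Real.sqrt N)
    (hg : ∀ i, g i = if i ∈ M then 1 / Real.sqrt M.card else 0)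
    (hb : ∀ i, b i = if i ∈ M then 0 else 1 / Real.sqrt ((N : ℝ) - M.card))
    (θ : ℝ) (hθ : θ = Real.arcsin (Real.sqrt (M.card / N)))
    (O D : EuclideanSpace ℝ (Fin N) →ₗ[ℝ] EuclideanSpace ℝ (Fin N))
    (hO : ∀ x, ∀ i, O x i = if i ∈ M then -x i else x i)
    (hD : ∀ x, D x = (2 * (inner ℝ u x : ℝ)) • u - x) :
    ∀ k : ℕ, (⇑D ∘ ⇑O)^[k] u =
      Real.sin ((2 * k + 1) * θ) • g + Real.cos ((2 * k + 1) * θ) • b := by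
  have hm : (0:ℝ) < M.card := by exact_mod_cast hM.card_pos
  have hNr : (0:ℝ) < N := by exact_mod_cast hN
  have hNm : (0:ℝ) < (N:ℝ) - M.card := by
    have : (M.card : ℝ) < N := by exact_mod_cast hMN
    linarith
  have hsm : Real.sqrt M.card ≠ 0 := by positivity
  have hsN : Real.sqrt N ≠ 0 := by positivity
  have hsNm : Real.sqrt ((N:ℝ) - M.card) ≠ 0 := by positivity
  have hs : Real.sin θ = Real.sqrt (M.card / N) := by
    rw [hθ, Real.sin_arcsin]
    · have : (0:ℝ) ≤ Real.sqrt (M.card / N) := Real.sqrt_nonneg _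
      linarith
    · rw [show (1:ℝ) = Real.sqrt 1 by simp]
      apply Real.sqrt_le_sqrt
      rw [div_le_one hNr]
      exact_mod_cast hMN.le
  have hc : Real.cos θ = Real.sqrt (((N:ℝ) - M.card) / N) := by
    rw [hθ, Real.cos_arcsin, Real.sq_sqrt (by positivity)]
    congr 1
    field_simp
  have hs' : Real.sin θ = Real.sqrt M.card / Real.sqrt N := by
    rw [hs, Real.sqrt_div hm.le]
  have hc' : Real.cos θ = Real.sqrt ((N:ℝ) - M.card) / Real.sqrt N := by
    rw [hc, Real.sqrt_div hNm.le]
  have hu' : u = Real.sin θ • g + Real.cos θ • b := by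
    ext i
    simp only [PiLp.add_apply, PiLp.smul_apply, hu, hg, hb, smul_eq_mul]
    split_ifs with h
    · rw [hs']
      field_simp
      ring
    · rw [hc']
      field_simp
      ring
  have hug : (inner ℝ u g : ℝ) = Real.sin θ := by
    rw [PiLp.inner_apply]
    simp only [RCLike.inner_apply, conj_trivial, hu, hg, mul_ite, mul_zero, ite_mul, zero_mul]
    rw [Finset.sum_ite_mem, Finset.univ_inter, Finset.sum_const, nsmul_eq_mul, hs']
    field_simp
    linear_combination -(Real.mul_self_sqrt hm.le)
  have hub : (inner ℝ u b : ℝ) = Real.cos θ := by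
    rw [PiLp.inner_apply]
    simp only [RCLike.inner_apply, conj_trivial, hu, hb, mul_ite, mul_zero, ite_mul, zero_mul]
    have hrw : ∀ x : Fin N, (if x ∈ M then (0:ℝ) else 1 / Real.sqrt ((N:ℝ) - M.card) * (1 / Real.sqrt N))
        = if x ∈ Mᶜ then 1 / Real.sqrt ((N:ℝ) - M.card) * (1 / Real.sqrt N) else 0 := by
      intro x; by_cases h : x ∈ M <;> simp [h]
    simp only [hrw]
    rw [Finset.sum_ite_mem, Finset.univ_inter, Finset.sum_const, nsmul_eq_mul,
      Finset.card_compl, Fintype.card_fin, Nat.cast_sub hMN.le, hc']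
    field_simp
    linear_combination -(Real.mul_self_sqrt hNm.le)
  have hOc : ∀ s c : ℝ, O (s • g + c • b) = (-s) • g + c • b := by
    intro s c
    ext i
    simp only [hO, PiLp.add_apply, PiLp.smul_apply, hg, hb, smul_eq_mul]
    split_ifs with h <;> ring
  have key : ∀ α : ℝ, D (O (Real.sin α • g + Real.cos α • b)) =
      Real.sin (α + 2*θ) • g + Real.cos (α + 2*θ) • b := by
    intro α
    rw [hOc, hD]
    have hin : (inner ℝ u ((-(Real.sin α)) • g + Real.cos α • b) : ℝ) =
        -(Real.sin α) * Real.sin θ + Real.cos α * Real.cos θ := by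
      rw [inner_add_right, real_inner_smul_right, real_inner_smul_right, hug, hub]
    rw [hin, hu']
    have hpy := Real.sin_sq_add_cos_sq θ
    have e1 : Real.sin (α + 2*θ) =
        2 * (-(Real.sin α) * Real.sin θ + Real.cos α * Real.cos θ) * Real.sin θ + Real.sin α := by
      rw [Real.sin_add, Real.sin_two_mul, Real.cos_two_mul]
      linear_combination 2 * Real.sin α * hpy
    have e2 : Real.cos (α + 2*θ) =
        2 * (-(Real.sin α) * Real.sin θ + Real.cos α * Real.cos θ) * Real.cos θ - Real.cos α := by
      rw [Real.cos_add, Real.sin_two_mul, Real.cos_two_mul]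
      ring
    rw [e1, e2]
    module
  intro k
  induction k with
  | zero => simpa using hu'
  | succ k ih =>
    rw [Function.iterate_succ_apply', ih]
    have harg : ((2 * (k+1:ℕ) + 1 : ℝ)) * θ = (2 * (k:ℕ) + 1) * θ + 2*θ := by
      push_cast; ring
    simp only [Function.comp_apply]
    rw [key ((2 * (k:ℕ) + 1) * θ), harg]
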